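/- Let A be a real symmetric n×n matrix with λ_min(A) > l, let δ_L > 0 with Φ_l(A) ≤ 1/δ_L, and let v ∈ R^n. Define L_A(v) = v^T(A - (l+δ_L)I)^{-2} v / (Φ_{l+δ_L}(A) - Φ_l(A)) - v^T(A - (l+δ_L)I)^{-1} v. If t > 0 satisfies 0 < 1/t ≤ L_A(v), then Φ_{l+δ_L}(A + t v v^T) ≤ Φ_l(A) and λ_min(A + t v v^T) > l + δ_L. -/

import Mathlib

open Matrix

/-- The lower potential `Φ_l(A) = Tr((A - lI)⁻¹)`. -/
noncomputable def lowerPotential {n : ℕ} (l : ℝ) (A : Matrix (Fin n) (Fin n) ℝ) : ℝ :=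
  ((A - l • (1 : Matrix (Fin n) (Fin n) ℝ))⁻¹).trace

section Aux

variable {n : ℕ}

lemma vecMulVec_mul' (v w : Fin n → ℝ) (X : Matrix (Fin n) (Fin n) ℝ) :
    vecMulVec v w * X = vecMulVec v (X.vecMul w) := by
  ext i j
  simp [mul_apply, vecMulVec_apply, vecMul, dotProduct, Finset.mul_sum, mul_assoc]

lemma vecMulVec_mul_vecMulVec (a b c d : Fin n → ℝ) :
    vecMulVec a b * vecMulVec c d = (b ⬝ᵥ c) • vecMulVec a d := by
  ext i j
  simp [mul_apply, vecMulVec_apply, dotProduct, Finset.sum_mul, Finset.mul_sum]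
  apply Finset.sum_congr rfl
  intros; ring

lemma trace_vecMulVec_mul (v w : Fin n → ℝ) (X : Matrix (Fin n) (Fin n) ℝ) :
    (vecMulVec v w * X).trace = w ⬝ᵥ X.mulVec v := by
  simp [trace, diag, mul_apply, vecMulVec_apply, dotProduct, mulVec, Finset.mul_sum]
  rw [Finset.sum_comm]
  apply Finset.sum_congr rfl
  intros; apply Finset.sum_congr rfl; intros; ring

lemma posSemidef_smul_vecMulVec (v : Fin n → ℝ) {t : ℝ} (ht : 0 ≤ t) :
    (t • vecMulVec v v).PosSemidef := by
  rw [posSemidef_iff_dotProduct_mulVec]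
  constructor
  · ext i j
    simp [vecMulVec_apply, conjTranspose_apply, mul_comm]
  · intro x
    have hx : vecMulVec v v *ᵥ x = (v ⬝ᵥ x) • v := by
      ext i
      simp [vecMulVec_apply, mulVec, dotProduct, Finset.mul_sum, mul_assoc]
      rw [Finset.sum_mul]
      apply Finset.sum_congr rfl
      intros; ring
    simp only [star_trivial, smul_mulVec, hx, dotProduct_smul, smul_eq_mul,
      dotProduct_comm x v]
    have : x ⬝ᵥ (v ⬝ᵥ x) • v = (v ⬝ᵥ x) * (v ⬝ᵥ x) := by
      rw [dotProduct_smul, smul_eq_mul, dotProduct_comm]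
    nlinarith [sq_nonneg (v ⬝ᵥ x)]

lemma sherman_key {M : Matrix (Fin n) (Fin n) ℝ} (hM : M.PosDef) (v : Fin n → ℝ) (t : ℝ)
    (ht : 0 < t) :
    (M + t • vecMulVec v v)⁻¹ =
      M⁻¹ - (t / (1 + t * (v ⬝ᵥ M⁻¹.mulVec v))) • (M⁻¹ * vecMulVec v v * M⁻¹) := by
  set V := vecMulVec v v with hV
  set s := v ⬝ᵥ M⁻¹.mulVec v with hs
  have hs0 : 0 ≤ s := by
    have := hM.inv.posSemidef.dotProduct_mulVec_nonneg v
    simpa using this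
  have hts : (0:ℝ) < 1 + t * s := by positivity
  set c := t / (1 + t * s) with hc
  have h1 : M * M⁻¹ = 1 := Matrix.mul_nonsing_inv _ hM.det_pos.ne'.isUnit
  have h2 : V * M⁻¹ * V = s • V := by
    rw [hV, vecMulVec_mul', _root_.vecMulVec_mul_vecMulVec]
    congr 1
    rw [hs, dotProduct_mulVec]
  apply Matrix.inv_eq_right_inv
  have e1 : M * (M⁻¹ * V * M⁻¹) = V * M⁻¹ := by
    rw [← Matrix.mul_assoc, ← Matrix.mul_assoc, h1, Matrix.one_mul]
  have e2 : V * (M⁻¹ * V * M⁻¹) = s • (V * M⁻¹) := by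
    rw [← Matrix.mul_assoc, ← Matrix.mul_assoc, Matrix.mul_assoc V M⁻¹ V, ← Matrix.mul_assoc, h2,
      Matrix.smul_mul]
  rw [Matrix.add_mul, Matrix.mul_sub, Matrix.mul_sub, Matrix.mul_smul, Matrix.mul_smul,
    Matrix.smul_mul, Matrix.smul_mul, e1, e2, h1, smul_smul, smul_smul]
  have hz : t - c * t * s - c = 0 := by
    rw [hc]; field_simp; ring
  calc 1 - c • (V * M⁻¹) + (t • (V * M⁻¹) - (c * t * s) • (V * M⁻¹))
      = 1 + ((t - c * t * s - c) • (V * M⁻¹)) := by rw [sub_smul, sub_smul]; abel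
    _ = 1 := by rw [hz, zero_smul, add_zero]

variable {U : Matrix (Fin n) (Fin n) ℝ}

lemma myConj_trace (hU : U ∈ Matrix.unitaryGroup (Fin n) ℝ) (X : Matrix (Fin n) (Fin n) ℝ) :
    (U * X * star U).trace = X.trace := by
  rw [trace_mul_cycle, (Matrix.mem_unitaryGroup_iff').mp hU, Matrix.one_mul]

lemma myConj_inv (hU : U ∈ Matrix.unitaryGroup (Fin n) ℝ) {d : Fin n → ℝ} (hd : ∀ i, d i ≠ 0) :
    (U * diagonal d * star U)⁻¹ = U * diagonal (fun i => (d i)⁻¹) * star U := by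
  apply Matrix.inv_eq_right_inv
  have h1 : star U * U = 1 := (Matrix.mem_unitaryGroup_iff').mp hU
  have h2 : U * star U = 1 := (Matrix.mem_unitaryGroup_iff).mp hU
  calc U * diagonal d * star U * (U * diagonal (fun i => (d i)⁻¹) * star U)
      = U * (diagonal d * (star U * U) * diagonal (fun i => (d i)⁻¹)) * star U := by
        simp only [Matrix.mul_assoc]
    _ = U * star U := by
        rw [h1, Matrix.mul_one, diagonal_mul_diagonal]
        have : (fun i => d i * (d i)⁻¹) = fun _ => (1:ℝ) := by
          funext i; exact mul_inv_cancel₀ (hd i)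
        rw [this, diagonal_one, Matrix.mul_one]
    _ = 1 := h2

lemma myConj_quadform (P : Matrix (Fin n) (Fin n) ℝ)
    (x : Fin n → ℝ) :
    x ⬝ᵥ (U * P * star U) *ᵥ x = ((star U) *ᵥ x) ⬝ᵥ P *ᵥ ((star U) *ᵥ x) := by
  have hx : star U *ᵥ x = x ᵥ* U := by
    rw [Matrix.star_eq_conjTranspose, Matrix.conjTranspose_eq_transpose_of_trivial,
      Matrix.mulVec_transpose]
  rw [Matrix.mul_assoc, ← Matrix.mulVec_mulVec, Matrix.dotProduct_mulVec, ← hx,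
    ← Matrix.mulVec_mulVec]

lemma myConj_posDef (hU : U ∈ Matrix.unitaryGroup (Fin n) ℝ) {P : Matrix (Fin n) (Fin n) ℝ}
    (hP : P.PosDef) : (U * P * star U).PosDef := by
  rw [posDef_iff_dotProduct_mulVec]
  constructor
  · rw [Matrix.star_eq_conjTranspose]
    exact isHermitian_mul_mul_conjTranspose _ hP.1
  · intro x hx
    have hy : (star U) *ᵥ x ≠ 0 := by
      intro h
      have := congrArg (fun z => U *ᵥ z) h
      simp only [Matrix.mulVec_mulVec, (Matrix.mem_unitaryGroup_iff).mp hU, Matrix.one_mulVec,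
        Matrix.mulVec_zero] at this
      exact hx this
    have h := hP.dotProduct_mulVec_pos hy
    simp only [star_trivial] at h ⊢
    rw [myConj_quadform]
    exact h

lemma myConj_posDef_iff (hU : U ∈ Matrix.unitaryGroup (Fin n) ℝ) {d : Fin n → ℝ} :
    (U * diagonal d * star U).PosDef ↔ ∀ i, 0 < d i := by
  constructor
  · intro h
    have h1 : star U * U = 1 := (Matrix.mem_unitaryGroup_iff').mp hU
    have key : diagonal d = star U * (U * diagonal d * star U) * star (star U) := by
      rw [star_star]
      calc diagonal d = (star U * U) * diagonal d * (star U * U) := by rw [h1]; simp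
        _ = star U * (U * diagonal d * star U) * U := by simp only [Matrix.mul_assoc]
    have : (diagonal d).PosDef := by
      rw [key]
      exact myConj_posDef (Unitary.star_mem hU) h
    exact fun i => (Matrix.posDef_diagonal_iff).mp this i
  · exact fun hd => myConj_posDef hU (Matrix.PosDef.diagonal hd)

lemma spectral_real {A : Matrix (Fin n) (Fin n) ℝ} (hA' : A.IsHermitian) :
    A = (hA'.eigenvectorUnitary : Matrix (Fin n) (Fin n) ℝ) * diagonal hA'.eigenvalues *
      star (hA'.eigenvectorUnitary : Matrix (Fin n) (Fin n) ℝ) := by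
  have := hA'.spectral_theorem
  simpa using this

lemma shift_decomp {A : Matrix (Fin n) (Fin n) ℝ} (hA' : A.IsHermitian) (c : ℝ) :
    A - c • (1 : Matrix (Fin n) (Fin n) ℝ) =
      (hA'.eigenvectorUnitary : Matrix (Fin n) (Fin n) ℝ) *
        diagonal (fun i => hA'.eigenvalues i - c) *
      star (hA'.eigenvectorUnitary : Matrix (Fin n) (Fin n) ℝ) := by
  set U := (hA'.eigenvectorUnitary : Matrix (Fin n) (Fin n) ℝ) with hUdef
  have h2 : U * star U = 1 := (Matrix.mem_unitaryGroup_iff).mp hA'.eigenvectorUnitary.2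
  have hd : diagonal (fun i => hA'.eigenvalues i - c) =
      diagonal hA'.eigenvalues - c • (1 : Matrix (Fin n) (Fin n) ℝ) := by
    ext i j
    by_cases h : i = j <;> simp [h, diagonal_apply, one_apply]
  rw [hd, Matrix.mul_sub, Matrix.sub_mul, ← spectral_real hA']
  congr 1
  rw [Matrix.mul_smul, Matrix.smul_mul, Matrix.mul_one, h2]

lemma potential_formula {A : Matrix (Fin n) (Fin n) ℝ} (hA' : A.IsHermitian) (c : ℝ)
    (hc : ∀ i, hA'.eigenvalues i ≠ c) :
    lowerPotential c A = ∑ i, (hA'.eigenvalues i - c)⁻¹ := by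
  rw [lowerPotential, shift_decomp hA' c,
    myConj_inv hA'.eigenvectorUnitary.2 (fun i => sub_ne_zero.mpr (hc i)),
    myConj_trace hA'.eigenvectorUnitary.2, trace_diagonal]

lemma posdef_shift_iff {A : Matrix (Fin n) (Fin n) ℝ} (hA' : A.IsHermitian) (c : ℝ) :
    (A - c • (1 : Matrix (Fin n) (Fin n) ℝ)).PosDef ↔ ∀ i, c < hA'.eigenvalues i := by
  rw [shift_decomp hA' c, myConj_posDef_iff hA'.eigenvectorUnitary.2]
  simp [sub_pos]

end Aux

/-- Lower Barrier Shift (Lemma 3.4): if `λ_min(A) > l` (i.e. `A - lI ≻ 0`),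
`Φ_l(A) ≤ 1/δL`, and `0 < 1/t ≤ L_A(v)`, then adding `t·vvᵀ` and shifting the lower
barrier by `δL` does not increase the lower potential, and the smallest eigenvalue
stays above the shifted barrier. -/
theorem lower_barrier_shift {n : ℕ} (A : Matrix (Fin n) (Fin n) ℝ) (hA : A.IsSymm)
    (l δL : ℝ) (hδ : 0 < δL)
    (hl : (A - l • (1 : Matrix (Fin n) (Fin n) ℝ)).PosDef)
    (hΦ : lowerPotential l A ≤ 1 / δL)
    (v : Fin n → ℝ) (t : ℝ) (ht : 0 < t)
    (hLt : 1 / t ≤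
      (v ⬝ᵥ ((A - (l + δL) • (1 : Matrix (Fin n) (Fin n) ℝ))⁻¹ *
          (A - (l + δL) • (1 : Matrix (Fin n) (Fin n) ℝ))⁻¹).mulVec v) /
        (lowerPotential (l + δL) A - lowerPotential l A)
      - v ⬝ᵥ ((A - (l + δL) • (1 : Matrix (Fin n) (Fin n) ℝ))⁻¹).mulVec v) :
    lowerPotential (l + δL) (A + t • vecMulVec v v) ≤ lowerPotential l A ∧
    ((A + t • vecMulVec v v) - (l + δL) • (1 : Matrix (Fin n) (Fin n) ℝ)).PosDef := by
  have ht' : 0 < 1 / t := by positivity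
  -- trivial case n = 0
  by_cases hn : n = 0
  · subst hn
    constructor
    · simp [lowerPotential, Matrix.trace]
    · exact ⟨Subsingleton.elim _ _, fun x hx => absurd (Subsingleton.elim x 0) hx⟩
  have hA' : A.IsHermitian := by
    rw [Matrix.IsHermitian, Matrix.conjTranspose_eq_transpose_of_trivial]; exact hA
  set μ := hA'.eigenvalues with hμdef
  have hμl : ∀ i, l < μ i := (posdef_shift_iff hA' l).mp hl
  have hΦ0 : lowerPotential l A = ∑ i, (μ i - l)⁻¹ :=
    potential_formula hA' l (fun i => (hμl i).ne')
  have hμδ : ∀ i, l + δL ≤ μ i := by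
    intro i
    have ha : 0 < μ i - l := sub_pos.mpr (hμl i)
    have hterm : (μ i - l)⁻¹ ≤ ∑ j, (μ j - l)⁻¹ := by
      apply Finset.single_le_sum (f := fun j => (μ j - l)⁻¹)
      · intro j _
        exact inv_nonneg.mpr (sub_nonneg.mpr (hμl j).le)
      · exact Finset.mem_univ i
    have h2 : (μ i - l)⁻¹ ≤ 1 / δL := by
      rw [← hΦ0] at hterm; linarith
    rw [one_div] at h2
    have := (inv_le_inv₀ ha hδ).mp h2
    linarith
  by_cases hstrict : ∀ i, l + δL < μ i
  · -- main case
    set M := A - (l + δL) • (1 : Matrix (Fin n) (Fin n) ℝ) with hMdef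
    have hM : M.PosDef := (posdef_shift_iff hA' (l + δL)).mpr hstrict
    have hΦ1 : lowerPotential (l + δL) A = ∑ i, (μ i - (l + δL))⁻¹ :=
      potential_formula hA' (l + δL) (fun i => (hstrict i).ne')
    set s := v ⬝ᵥ M⁻¹.mulVec v with hsdef
    set q := v ⬝ᵥ (M⁻¹ * M⁻¹).mulVec v with hqdef
    set d := lowerPotential (l + δL) A - lowerPotential l A with hddef
    have hs0 : 0 ≤ s := by
      have := hM.inv.posSemidef.dotProduct_mulVec_nonneg v
      simpa using this
    have hts : (0:ℝ) < 1 + t * s := by positivity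
    have hd0 : 0 < d := by
      rw [hddef, hΦ0, hΦ1, ← Finset.sum_sub_distrib]
      apply Finset.sum_pos
      · intro i _
        have hb : 0 < μ i - (l + δL) := sub_pos.mpr (hstrict i)
        have := inv_strictAnti₀ hb (by linarith : μ i - (l + δL) < μ i - l)
        linarith
      · haveI : Nonempty (Fin n) := Fin.pos_iff_nonempty.mp (Nat.pos_of_ne_zero hn)
        exact Finset.univ_nonempty
    set c := t / (1 + t * s) with hcdef
    have hdcq : d ≤ c * q := by
      have h1 : (1 + t * s) / t ≤ q / d := by
        have : (1 + t * s) / t = 1 / t + s := by field_simp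
        rw [this]; linarith [hLt]
      have h2 : (1 + t * s) * d ≤ q * t := (div_le_div_iff₀ ht hd0).mp h1
      rw [hcdef, div_mul_eq_mul_div, le_div_iff₀ hts]
      nlinarith
    have hVps : (t • vecMulVec v v).PosSemidef := posSemidef_smul_vecMulVec v ht.le
    have hsum : A + t • vecMulVec v v - (l + δL) • (1 : Matrix (Fin n) (Fin n) ℝ)
        = M + t • vecMulVec v v := by rw [hMdef]; abel
    have hposdef : (A + t • vecMulVec v v
        - (l + δL) • (1 : Matrix (Fin n) (Fin n) ℝ)).PosDef := by
      rw [hsum]; exact hM.add_posSemidef hVps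
    refine ⟨?_, hposdef⟩
    have hkey := sherman_key hM v t ht
    have htr : lowerPotential (l + δL) (A + t • vecMulVec v v) =
        lowerPotential (l + δL) A - c * q := by
      rw [lowerPotential, hsum, hkey, trace_sub, trace_smul]
      have htr2 : (M⁻¹ * vecMulVec v v * M⁻¹).trace = q := by
        rw [trace_mul_cycle M⁻¹ (vecMulVec v v) M⁻¹, trace_mul_comm,
          trace_vecMulVec_mul]
      rw [htr2, ← hsdef, ← hcdef]
      rfl
    rw [htr]
    linarith
  · -- degenerate case: some eigenvalue equals l + δL; derive a contradiction from hLt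
    exfalso
    push_neg at hstrict
    obtain ⟨i, hi⟩ := hstrict
    have hieq : μ i = l + δL := le_antisymm hi (hμδ i)
    have hall : ∀ j, μ j = l + δL := by
      intro j
      by_contra hj
      have hjgt : l + δL < μ j := lt_of_le_of_ne (hμδ j) (Ne.symm hj)
      have hij : j ≠ i := by intro h; rw [h, hieq] at hjgt; exact lt_irrefl _ hjgt
      have hsub : ({i, j} : Finset (Fin n)) ⊆ Finset.univ := Finset.subset_univ _
      have hle : ∑ k ∈ ({i, j} : Finset (Fin n)), (μ k - l)⁻¹ ≤ ∑ k, (μ k - l)⁻¹ := by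
        apply Finset.sum_le_sum_of_subset_of_nonneg hsub
        intro k _ _
        exact inv_nonneg.mpr (sub_nonneg.mpr (hμl k).le)
      rw [Finset.sum_pair (Ne.symm hij)] at hle
      have hiterm : (μ i - l)⁻¹ = 1 / δL := by rw [hieq, add_sub_cancel_left, one_div]
      have hjterm : 0 < (μ j - l)⁻¹ := inv_pos.mpr (sub_pos.mpr (hμl j))
      rw [← hΦ0] at hle
      rw [hiterm] at hle
      linarith
    have hM0 : A - (l + δL) • (1 : Matrix (Fin n) (Fin n) ℝ) = 0 := by
      rw [shift_decomp hA' (l + δL)]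
      have : (fun k => hA'.eigenvalues k - (l + δL)) = fun _ => (0:ℝ) := by
        funext k; rw [← hμdef, hall k]; ring
      rw [this, diagonal_zero, Matrix.mul_zero, Matrix.zero_mul]
    have hinv0 : (0 : Matrix (Fin n) (Fin n) ℝ)⁻¹ = 0 := by
      apply Matrix.nonsing_inv_apply_not_isUnit
      haveI : Nonempty (Fin n) := Fin.pos_iff_nonempty.mp (Nat.pos_of_ne_zero hn)
      rw [Matrix.det_zero]
      exact not_isUnit_zero
    rw [hM0, hinv0] at hLt
    simp only [Matrix.mul_zero, Matrix.zero_mulVec, dotProduct_zero, zero_div, sub_zero] at hLt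
    linarith
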